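/- Let L : ℝⁿ × ℝⁿ × ℝ → ℝ be continuously differentiable, F^fr : ℝⁿ × ℝⁿ × ℝ → ℝⁿ, and let v̄ : ℝⁿ × ℝⁿ × ℝ → ℝⁿ (arguments (q, p, S)) be continuously differentiable with (∂L/∂v)(q, v̄(q, p, S), S) = p for all (q, p, S) and v̄(q, (∂L/∂v)(q, v, S), S) = v for all (q, v, S). Define H(q, p, S) := ⟨p, v̄(q, p, S)⟩ − L(q, v̄(q, p, S), S) and ℱ^fr(q, p, S) := F^fr(q, v̄(q, p, S), S). Then a C¹ curve (q(t), S(t), p(t)) satisfies ṗ = −∂H/∂q + ℱ^fr, q̇ = ∂H/∂p, (∂H/∂S)·Ṡ = −⟨ℱ^fr, q̇⟩ (derivatives of H and ℱ^fr evaluated at (q(t), p(t), S(t))) if and only if the curve (q(t), S(t), v(t), p(t)) with v(t) := v̄(q(t), p(t), S(t)) satisfies ṗ − (∂L/∂q)(q, v, S) = F^fr(q, v, S), (∂L/∂S)(q, v, S)·Ṡ = ⟨F^fr(q, v, S), q̇⟩, p = (∂L/∂v)(q, v, S), and v = q̇. -/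

import Mathlib

open scoped RealInnerProductSpace

noncomputable section

/-- `ℝⁿ` with the Euclidean inner product. -/
abbrev E (n : ℕ) : Type := EuclideanSpace ℝ (Fin n)

/-- Gradient `∂L/∂q` of the Lagrangian `L(q, v, S)`. -/
noncomputable def gQ {n : ℕ} (L : E n → E n → ℝ → ℝ) (q v : E n) (S : ℝ) : E n :=
  gradient (fun x => L x v S) q

/-- Gradient `∂L/∂v` of the Lagrangian `L(q, v, S)`. -/
noncomputable def gV {n : ℕ} (L : E n → E n → ℝ → ℝ) (q v : E n) (S : ℝ) : E n :=
  gradient (fun y => L q y S) v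

/-- Partial derivative `∂L/∂S` of the Lagrangian `L(q, v, S)`. -/
noncomputable def LS {n : ℕ} (L : E n → E n → ℝ → ℝ) (q v : E n) (S : ℝ) : ℝ :=
  deriv (L q v) S

lemma inner_gradient {n : ℕ} (f : E n → ℝ) (x dq : E n) :
    ⟪gradient f x, dq⟫ = fderiv ℝ f x dq := by
  rw [gradient, InnerProductSpace.toDual_symm_apply]

/-- Total derivative of `L` in terms of the partial gradients. -/
lemma keyD {n : ℕ} (L : E n → E n → ℝ → ℝ)
    (hL : Differentiable ℝ (fun x : E n × E n × ℝ => L x.1 x.2.1 x.2.2))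
    (a b : E n) (c : ℝ) (u : E n × E n × ℝ) :
    fderiv ℝ (fun x : E n × E n × ℝ => L x.1 x.2.1 x.2.2) (a, b, c) u
      = ⟪gQ L a b c, u.1⟫ + ⟪gV L a b c, u.2.1⟫ + LS L a b c * u.2.2 := by
  set D := fderiv ℝ (fun x : E n × E n × ℝ => L x.1 x.2.1 x.2.2) (a, b, c) with hD
  have hDat : HasFDerivAt (fun x : E n × E n × ℝ => L x.1 x.2.1 x.2.2) D (a, b, c) :=
    (hL (a, b, c)).hasFDerivAt
  -- partial in q
  have hjq : HasFDerivAt (fun x : E n => ((x, b, c) : E n × E n × ℝ))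
      ((ContinuousLinearMap.id ℝ (E n)).prod 0) a :=
    HasFDerivAt.prodMk (hasFDerivAt_id a) (hasFDerivAt_const (b, c) a)
  have hq : HasFDerivAt (fun x : E n => L x b c)
      (D.comp ((ContinuousLinearMap.id ℝ (E n)).prod 0)) a := HasFDerivAt.comp (g := fun x : E n × E n × ℝ => L x.1 x.2.1 x.2.2) a hDat hjq
  have h1 : ⟪gQ L a b c, u.1⟫ = D (u.1, 0, 0) := by
    rw [gQ, inner_gradient, hq.fderiv]
    simp [Prod.mk_zero_zero]
  -- partial in v
  have hjv : HasFDerivAt (fun y : E n => ((a, y, c) : E n × E n × ℝ))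
      ((0 : E n →L[ℝ] E n).prod ((ContinuousLinearMap.id ℝ (E n)).prod 0)) b :=
    HasFDerivAt.prodMk (hasFDerivAt_const a b) (HasFDerivAt.prodMk (hasFDerivAt_id b) (hasFDerivAt_const c b))
  have hvv : HasFDerivAt (fun y : E n => L a y c)
      (D.comp ((0 : E n →L[ℝ] E n).prod ((ContinuousLinearMap.id ℝ (E n)).prod 0))) b :=
    HasFDerivAt.comp (g := fun x : E n × E n × ℝ => L x.1 x.2.1 x.2.2) b hDat hjv
  have h2 : ⟪gV L a b c, u.2.1⟫ = D (0, u.2.1, 0) := by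
    rw [gV, inner_gradient, hvv.fderiv]
    simp
  -- partial in S
  have hjs : HasDerivAt (fun s : ℝ => ((a, b, s) : E n × E n × ℝ)) ((0, 0, 1) : E n × E n × ℝ) c :=
    HasDerivAt.prodMk (hasDerivAt_const c a) (HasDerivAt.prodMk (hasDerivAt_const c b) (hasDerivAt_id c))
  have hs : HasDerivAt (fun s : ℝ => L a b s) (D (0, 0, 1)) c :=
    HasFDerivAt.comp_hasDerivAt (l := fun x : E n × E n × ℝ => L x.1 x.2.1 x.2.2) c hDat hjs
  have h3 : LS L a b c * u.2.2 = D (0, 0, u.2.2) := by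
    have : (0, 0, u.2.2) = u.2.2 • ((0, 0, 1) : E n × E n × ℝ) := by
      simp [Prod.smul_mk]
    rw [LS]
    have hd : deriv (L a b) c = D (0, 0, 1) := hs.deriv
    rw [hd, this, map_smul, smul_eq_mul, mul_comm]
  have hu : u = (u.1, 0, 0) + (0, u.2.1, 0) + (0, 0, u.2.2) := by
    ext <;> simp
  rw [h1, h2, h3, ← map_add, ← map_add, ← hu]

theorem statement18 {n : ℕ} (L : E n → E n → ℝ → ℝ)
    (hL : ContDiff ℝ 1 (fun x : E n × E n × ℝ => L x.1 x.2.1 x.2.2))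
    (Ffr : E n → E n → ℝ → E n)
    (vbar : E n → E n → ℝ → E n)
    (hvbar : ContDiff ℝ 1 (fun x : E n × E n × ℝ => vbar x.1 x.2.1 x.2.2))
    (hleg1 : ∀ (q p : E n) (S : ℝ), gV L q (vbar q p S) S = p)
    (hleg2 : ∀ (q v : E n) (S : ℝ), vbar q (gV L q v S) S = v)
    (H : E n → E n → ℝ → ℝ)
    (hH : ∀ (q p : E n) (S : ℝ), H q p S = ⟪p, vbar q p S⟫ - L q (vbar q p S) S)
    (Ffr' : E n → E n → ℝ → E n)
    (hF : ∀ (q p : E n) (S : ℝ), Ffr' q p S = Ffr q (vbar q p S) S)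
    (q p : ℝ → E n) (S : ℝ → ℝ)
    (hq : ContDiff ℝ 1 q) (hp : ContDiff ℝ 1 p) (hS : ContDiff ℝ 1 S)
    (v : ℝ → E n) (hv : ∀ t : ℝ, v t = vbar (q t) (p t) (S t)) :
    (∀ t : ℝ,
      deriv p t =
        -(gradient (fun x => H x (p t) (S t)) (q t)) + Ffr' (q t) (p t) (S t) ∧
      deriv q t = gradient (fun y => H (q t) y (S t)) (p t) ∧
      deriv (fun s => H (q t) (p t) s) (S t) * deriv S t =
        -⟪Ffr' (q t) (p t) (S t), deriv q t⟫) ↔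
    (∀ t : ℝ,
      deriv p t - gQ L (q t) (v t) (S t) = Ffr (q t) (v t) (S t) ∧
      LS L (q t) (v t) (S t) * deriv S t = ⟪Ffr (q t) (v t) (S t), deriv q t⟫ ∧
      p t = gV L (q t) (v t) (S t) ∧ v t = deriv q t) := by
  have hLd : Differentiable ℝ (fun x : E n × E n × ℝ => L x.1 x.2.1 x.2.2) :=
    hL.differentiable one_ne_zero
  have hvd : Differentiable ℝ (fun x : E n × E n × ℝ => vbar x.1 x.2.1 x.2.2) :=
    hvbar.differentiable one_ne_zero
  -- gradient of H in q
  have gradA : ∀ (a b : E n) (c : ℝ),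
      gradient (fun x => H x b c) a = -(gQ L a (vbar a b c) c) := by
    intro a b c
    have hVd : DifferentiableAt ℝ (fun x : E n => vbar x b c) a :=
      DifferentiableAt.comp (g := fun x : E n × E n × ℝ => vbar x.1 x.2.1 x.2.2) a (hvd (a, b, c))
        (((differentiable_id (𝕜 := ℝ)).prodMk (differentiable_const (b, c))) a)
    set V' := fderiv ℝ (fun x : E n => vbar x b c) a with hV'
    have hV : HasFDerivAt (fun x : E n => vbar x b c) V' a := hVd.hasFDerivAt
    have hfun : (fun x => H x b c)
        = fun x => ⟪b, vbar x b c⟫ - L x (vbar x b c) c := funext fun x => hH x b c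
    have h1 : HasFDerivAt (fun x : E n => ⟪b, vbar x b c⟫)
        ((fderivInnerCLM ℝ (b, vbar a b c)).comp ((0 : E n →L[ℝ] E n).prod V')) a :=
      HasFDerivAt.inner ℝ (hasFDerivAt_const b a) hV
    have h2 : HasFDerivAt (fun x : E n => L x (vbar x b c) c)
        ((fderiv ℝ (fun x : E n × E n × ℝ => L x.1 x.2.1 x.2.2) (a, vbar a b c, c)).comp
          ((ContinuousLinearMap.id ℝ (E n)).prod (V'.prod 0))) a :=
      HasFDerivAt.comp (g := fun x : E n × E n × ℝ => L x.1 x.2.1 x.2.2) a (hLd (a, vbar a b c, c)).hasFDerivAt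
        (HasFDerivAt.prodMk (hasFDerivAt_id a) (HasFDerivAt.prodMk hV (hasFDerivAt_const c a)))
    have h3 := h1.fun_sub h2
    rw [hfun]
    refine HasGradientAt.gradient ?_
    rw [hasGradientAt_iff_hasFDerivAt]
    refine h3.congr_fderiv ?_
    ext dq
    simp [keyD L hLd, hleg1, fderivInnerCLM_apply, inner_neg_left]
  -- gradient of H in p
  have gradB : ∀ (a b : E n) (c : ℝ),
      gradient (fun y => H a y c) b = vbar a b c := by
    intro a b c
    have hWd : DifferentiableAt ℝ (fun y : E n => vbar a y c) b :=
      DifferentiableAt.comp (g := fun x : E n × E n × ℝ => vbar x.1 x.2.1 x.2.2) b (hvd (a, b, c))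
        (((differentiable_const a).prodMk
          ((differentiable_id (𝕜 := ℝ)).prodMk (differentiable_const c))) b)
    set W' := fderiv ℝ (fun y : E n => vbar a y c) b with hW'
    have hW : HasFDerivAt (fun y : E n => vbar a y c) W' b := hWd.hasFDerivAt
    have hfun : (fun y => H a y c)
        = fun y => ⟪y, vbar a y c⟫ - L a (vbar a y c) c := funext fun y => hH a y c
    have h1 : HasFDerivAt (fun y : E n => ⟪y, vbar a y c⟫)
        ((fderivInnerCLM ℝ (b, vbar a b c)).comp
          ((ContinuousLinearMap.id ℝ (E n)).prod W')) b :=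
      HasFDerivAt.inner ℝ (hasFDerivAt_id b) hW
    have h2 : HasFDerivAt (fun y : E n => L a (vbar a y c) c)
        ((fderiv ℝ (fun x : E n × E n × ℝ => L x.1 x.2.1 x.2.2) (a, vbar a b c, c)).comp
          ((0 : E n →L[ℝ] E n).prod (W'.prod 0))) b :=
      HasFDerivAt.comp (g := fun x : E n × E n × ℝ => L x.1 x.2.1 x.2.2) b (hLd (a, vbar a b c, c)).hasFDerivAt
        (HasFDerivAt.prodMk (hasFDerivAt_const a b) (HasFDerivAt.prodMk hW (hasFDerivAt_const c b)))
    have h3 := h1.fun_sub h2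
    rw [hfun]
    refine HasGradientAt.gradient ?_
    rw [hasGradientAt_iff_hasFDerivAt]
    refine h3.congr_fderiv ?_
    ext dp
    simp [keyD L hLd, hleg1, fderivInnerCLM_apply, real_inner_comm (vbar a b c) dp]
  -- derivative of H in S
  have derivC : ∀ (a b : E n) (c : ℝ),
      deriv (fun s => H a b s) c = -(LS L a (vbar a b c) c) := by
    intro a b c
    have hUd : DifferentiableAt ℝ (fun s : ℝ => vbar a b s) c :=
      DifferentiableAt.comp (g := fun x : E n × E n × ℝ => vbar x.1 x.2.1 x.2.2) c (hvd (a, b, c))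
        (((differentiable_const a).prodMk
          ((differentiable_const b).prodMk (differentiable_id (𝕜 := ℝ)))) c)
    set u' := deriv (fun s : ℝ => vbar a b s) c with hu'
    have hU : HasDerivAt (fun s : ℝ => vbar a b s) u' c := hUd.hasDerivAt
    have hfun : (fun s => H a b s)
        = fun s => ⟪b, vbar a b s⟫ - L a (vbar a b s) s := funext fun s => hH a b s
    have h1 : HasDerivAt (fun s : ℝ => ⟪b, vbar a b s⟫) (⟪b, u'⟫ + ⟪(0 : E n), vbar a b c⟫) c :=
      HasDerivAt.inner ℝ (hasDerivAt_const c b) hU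
    have h2 : HasDerivAt (fun s : ℝ => L a (vbar a b s) s)
        ((fderiv ℝ (fun x : E n × E n × ℝ => L x.1 x.2.1 x.2.2) (a, vbar a b c, c))
          ((0, u', 1) : E n × E n × ℝ)) c :=
      HasFDerivAt.comp_hasDerivAt (l := fun x : E n × E n × ℝ => L x.1 x.2.1 x.2.2) c (hLd (a, vbar a b c, c)).hasFDerivAt
        (HasDerivAt.prodMk (hasDerivAt_const c a) (HasDerivAt.prodMk hU (hasDerivAt_id c)))
    have h3 := h1.fun_sub h2
    rw [hfun, h3.deriv]
    rw [keyD L hLd, hleg1]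
    simp
  constructor
  · intro h t
    obtain ⟨h1, h2, h3⟩ := h t
    rw [gradA, gradB, hF] at *
    rw [derivC] at h3
    rw [hv]
    refine ⟨by rw [h1]; abel, ?_, (hleg1 _ _ _).symm, h2.symm⟩
    have := h3
    rw [neg_mul, neg_eq_iff_eq_neg, neg_neg] at this
    exact this
  · intro h t
    obtain ⟨h1, h2, h3, h4⟩ := h t
    rw [hv] at h1 h2 h4
    rw [gradA, gradB, hF, derivC]
    refine ⟨by rw [← h1]; abel, h4.symm, ?_⟩
    rw [neg_mul, h2]
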